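/- Let A be an order of rank n ≥ 1 and 𝔞 = ∏_𝔭 𝔭^{t(𝔭)} a product of powers of maximal ideals of A of finite index. Then the exponent of the unit group (A/𝔞)^× divides lcm over 𝔭 with t(𝔭) > 0 of (N(𝔭) − 1)·p_𝔭^{t(𝔭)−1}, where p_𝔭 = char(A/𝔭) and N(𝔭) = #(A/𝔭). -/

import Mathlib

/-- Auxiliary: if `a ≡ 1 mod q` and `p ∈ q` is prime, then `a^(p^m) ≡ 1 mod q^(m+1)`. -/
lemma aux_pow_prime_pow_sub_one_mem {A : Type*} [CommRing A] (q : Ideal A) {p : ℕ}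
    (hp : p.Prime) (hpq : (p : A) ∈ q) {a : A} (ha : a - 1 ∈ q) :
    ∀ m : ℕ, a ^ p ^ m - 1 ∈ q ^ (m + 1)
  | 0 => by simpa using ha
  | (m + 1) => by
    have ih := aux_pow_prime_pow_sub_one_mem q hp hpq ha m
    set b := a ^ p ^ m with hb
    set y := b - 1 with hy
    have hby : b = 1 + y := by rw [hy]; ring
    have hbp : a ^ p ^ (m + 1) = b ^ p := by rw [hb, ← pow_mul, pow_succ]
    rw [hbp, hby, add_pow_prime_eq' hp]
    have h1 : y ^ p ∈ q ^ (m + 1 + 1) := by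
      have h2 : y ^ p ∈ (q ^ (m + 1)) ^ p := Ideal.pow_mem_pow ih p
      rw [← pow_mul] at h2
      exact Ideal.pow_le_pow_right (by nlinarith [hp.two_le]) h2
    have hr : (∑ k ∈ Finset.Ioo 0 p, 1 ^ k * y ^ (p - k) * ((p.choose k / p : ℕ) : A))
        ∈ q ^ (m + 1) := by
      refine Ideal.sum_mem _ fun k hk => ?_
      rw [Finset.mem_Ioo] at hk
      refine Ideal.mul_mem_right _ _ (Ideal.mul_mem_left _ _ ?_)
      have h2 : y ^ (p - k) ∈ (q ^ (m + 1)) ^ (p - k) := Ideal.pow_mem_pow ih _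
      rw [← pow_mul] at h2
      exact Ideal.pow_le_pow_right (Nat.le_mul_of_pos_right _ (by omega)) h2
    have h3 : (p : A) * (∑ k ∈ Finset.Ioo 0 p, 1 ^ k * y ^ (p - k) * ((p.choose k / p : ℕ) : A))
        ∈ q ^ (m + 1 + 1) := by
      rw [pow_succ, mul_comm ((p : A))]
      exact Ideal.mul_mem_mul hr hpq
    have : (1 : A) ^ p + y ^ p +
        (p : A) * (∑ k ∈ Finset.Ioo 0 p, 1 ^ k * y ^ (p - k) * ((p.choose k / p : ℕ) : A)) - 1
        = y ^ p + (p : A) * (∑ k ∈ Finset.Ioo 0 p, 1 ^ k * y ^ (p - k)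
          * ((p.choose k / p : ℕ) : A)) := by ring
    rw [this]
    exact Ideal.add_mem _ h1 h3

/-- Auxiliary: membership in a product of pairwise coprime ideals. -/
lemma aux_mem_prod {A : Type*} [CommRing A] {ι : Type*} (S : Finset ι) (f : ι → Ideal A)
    (hco : ∀ i ∈ S, ∀ j ∈ S, i ≠ j → f i ⊔ f j = ⊤) {x : A}
    (hx : ∀ i ∈ S, x ∈ f i) : x ∈ ∏ i ∈ S, f i := by
  classical
  induction S using Finset.induction_on with
  | empty => simp
  | @insert a s ha ih =>
    rw [Finset.prod_insert ha]
    have hcop : f a ⊔ ∏ i ∈ s, f i = ⊤ := by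
      rw [← Ideal.isCoprime_iff_sup_eq]
      refine IsCoprime.prod_right fun i hi => ?_
      rw [Ideal.isCoprime_iff_sup_eq]
      exact hco a (Finset.mem_insert_self a s) i (Finset.mem_insert_of_mem hi)
        (fun h => ha (h ▸ hi))
    rw [Ideal.mul_eq_inf_of_coprime hcop]
    exact ⟨hx a (Finset.mem_insert_self a s),
      ih (fun i hi j hj => hco i (Finset.mem_insert_of_mem hi) j (Finset.mem_insert_of_mem hj))
        (fun i hi => hx i (Finset.mem_insert_of_mem hi))⟩

/-- Auxiliary: Fermat's little theorem in the residue field. -/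
lemma aux_units_pow {A : Type*} [CommRing A] (𝔭 : Ideal A) [𝔭.IsMaximal] [Finite (A ⧸ 𝔭)]
    {x : A ⧸ 𝔭} (hx : IsUnit x) : x ^ (Nat.card (A ⧸ 𝔭) - 1) = 1 := by
  letI := Ideal.Quotient.field 𝔭
  letI : Fintype (A ⧸ 𝔭) := Fintype.ofFinite _
  rw [Nat.card_eq_fintype_card]
  exact FiniteField.pow_card_sub_one_eq_one x hx.ne_zero

/-- Let `A` be an order and `𝔞 = ∏_{𝔭 ∈ S} 𝔭^{t 𝔭}` a product of powers of
maximal ideals of finite index. Then the exponent of `(A/𝔞)ˣ` divides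
`lcm_{𝔭} (N(𝔭) − 1)·p_𝔭^{t 𝔭 − 1}`. -/
theorem stmt15 (A : Type*) [CommRing A] [Module.Free ℤ A] [Module.Finite ℤ A]
    (hn : 1 ≤ Module.finrank ℤ A)
    (S : Finset (Ideal A)) (t : Ideal A → ℕ)
    (hmax : ∀ 𝔭 ∈ S, 𝔭.IsMaximal) (hfin : ∀ 𝔭 ∈ S, Finite (A ⧸ 𝔭))
    (ht : ∀ 𝔭 ∈ S, 0 < t 𝔭) :
    Monoid.exponent (A ⧸ ∏ 𝔭 ∈ S, 𝔭 ^ t 𝔭)ˣ ∣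
      S.lcm fun 𝔭 => (Nat.card (A ⧸ 𝔭) - 1) * (ringChar (A ⧸ 𝔭)) ^ (t 𝔭 - 1) := by
  classical
  set 𝔞 : Ideal A := ∏ 𝔭 ∈ S, 𝔭 ^ t 𝔭 with h𝔞
  set L : ℕ := S.lcm fun 𝔭 => (Nat.card (A ⧸ 𝔭) - 1) * (ringChar (A ⧸ 𝔭)) ^ (t 𝔭 - 1) with hL
  refine Monoid.exponent_dvd_of_forall_pow_eq_one fun u => ?_
  -- lift u to an element of A
  obtain ⟨a, ha⟩ := Ideal.Quotient.mk_surjective (u : A ⧸ 𝔞)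
  ext
  rw [Units.val_pow_eq_pow_val, Units.val_one, ← ha, ← map_pow,
    ← map_one (Ideal.Quotient.mk 𝔞), Ideal.Quotient.mk_eq_mk_iff_sub_mem]
  refine aux_mem_prod S _ (fun i hi j hj hij => Ideal.pow_sup_pow_eq_top
    ((hmax i hi).coprime_of_ne (hmax j hj) hij)) (fun 𝔭 h𝔭 => ?_)
  -- work modulo 𝔭 ^ t 𝔭
  haveI := hmax 𝔭 h𝔭
  haveI := hfin 𝔭 h𝔭
  have hpprime : (ringChar (A ⧸ 𝔭)).Prime := CharP.char_is_prime (A ⧸ 𝔭) _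
  have hpmem : ((ringChar (A ⧸ 𝔭) : ℕ) : A) ∈ 𝔭 := by
    rw [← Ideal.Quotient.eq_zero_iff_mem, map_natCast]
    exact CharP.cast_eq_zero (A ⧸ 𝔭) _
  have h𝔞le : 𝔞 ≤ 𝔭 ^ t 𝔭 := by
    rw [h𝔞]
    obtain ⟨K, hK⟩ := Finset.dvd_prod_of_mem (fun 𝔭 => 𝔭 ^ t 𝔭) h𝔭
    rw [hK]
    exact Ideal.mul_le_left
  have hle𝔭 : 𝔞 ≤ 𝔭 := h𝔞le.trans (Ideal.pow_le_self (ht 𝔭 h𝔭).ne')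
  have hu : IsUnit (Ideal.Quotient.mk 𝔭 a) := by
    have h5 : Ideal.Quotient.mk 𝔭 a = Ideal.Quotient.factor hle𝔭 (u : A ⧸ 𝔞) := by
      rw [← ha]; rfl
    rw [h5]
    exact (Units.isUnit u).map _
  -- Fermat in the residue field
  have hN : Ideal.Quotient.mk 𝔭 a ^ (Nat.card (A ⧸ 𝔭) - 1) = 1 := aux_units_pow 𝔭 hu
  have hmem𝔭 : a ^ (Nat.card (A ⧸ 𝔭) - 1) - 1 ∈ 𝔭 := by
    rw [← Ideal.Quotient.mk_eq_mk_iff_sub_mem, map_pow, map_one]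
    exact hN
  have hkey := aux_pow_prime_pow_sub_one_mem 𝔭 hpprime hpmem hmem𝔭 (t 𝔭 - 1)
  rw [← pow_mul, Nat.sub_add_cancel (ht 𝔭 h𝔭)] at hkey
  -- now a ^ d - 1 ∈ 𝔭 ^ t 𝔭 where d ∣ L
  have hdvd : (Nat.card (A ⧸ 𝔭) - 1) * ringChar (A ⧸ 𝔭) ^ (t 𝔭 - 1) ∣ L :=
    Finset.dvd_lcm h𝔭
  obtain ⟨c, hc⟩ := hdvd
  rw [← Ideal.Quotient.mk_eq_mk_iff_sub_mem, map_pow, map_one, hc, pow_mul]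
  rw [← Ideal.Quotient.mk_eq_mk_iff_sub_mem, map_pow, map_one] at hkey
  rw [hkey, one_pow]
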